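/- Let P be a finite poc-set and a ∈ P a proper element. If a is nested with every element of P (i.e., for every proper b ≠ a, a*, one of a ≤ b, a ≤ b*, a* ≤ b, a* ≤ b* holds), then there is exactly one edge {u, v} of Γ(P) with u Δ v = {a, a*}. -/
import Mathlib


structure PocSet (P : Type*) [PartialOrder P] where
  zero : P
  zero_le : ∀ a : P, zero ≤ a
  star : P → P
  star_star : ∀ a : P, star (star a) = a
  star_anti : ∀ a b : P, a ≤ b → star b ≤ star a
  eq_zero_of_le_star : ∀ a : P, a ≤ star a → a = zero

namespace PocSet

variable {P : Type*} [PartialOrder P]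

/-- The maximum element `1 = 0*` of a poc-set. -/
def one (S : PocSet P) : P := S.star S.zero

/-- An element is proper if it is neither `0` nor `1`. -/
def Proper (S : PocSet P) (a : P) : Prop := a ≠ S.zero ∧ a ≠ S.one

/-- A subset is coherent if `a ≤ b*` holds for no two of its members. -/
def Coherent (S : PocSet P) (α : Set P) : Prop := ∀ a ∈ α, ∀ b ∈ α, ¬ a ≤ S.star b

/-- A vertex of `Γ(P)`: a coherent `*`-selection. -/
def IsVertex (S : PocSet P) (α : Set P) : Prop :=
  S.Coherent α ∧ ∀ a : P, a ∈ α ↔ S.star a ∉ α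

/-- The metric `Δ(u,v) = |u Δ v| / 2` on vertices. -/
noncomputable def delta (S : PocSet P) (u v : Set P) : ℝ :=
  ((symmDiff u v).ncard : ℝ) / 2

/-- The median of three sets. -/
def med (u v w : Set P) : Set P := (u ∩ v) ∪ (v ∩ w) ∪ (u ∩ w)

end PocSet

/-- A morphism of poc-sets: sends `0` to `0`, preserves order, commutes with `*`. -/
def IsPocMorphism {P Q : Type*} [PartialOrder P] [PartialOrder Q]
    (S : PocSet P) (T : PocSet Q) (f : P → Q) : Prop :=
  f S.zero = T.zero ∧ (∀ a b : P, a ≤ b → f a ≤ f b) ∧ ∀ a : P, f (S.star a) = T.star (f a)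

namespace PocSet

variable {P : Type*} [PartialOrder P]

lemma star_inj (S : PocSet P) {a b : P} (h : S.star a = S.star b) : a = b := by
  have := congrArg S.star h
  rwa [S.star_star, S.star_star] at this

lemma le_one (S : PocSet P) (a : P) : a ≤ S.one := by
  have := S.star_anti _ _ (S.zero_le (S.star a))
  rwa [S.star_star] at this

lemma eq_one_of_star_eq_zero (S : PocSet P) {a : P} (h : S.star a = S.zero) : a = S.one := by
  have := congrArg S.star h
  rwa [S.star_star] at this

lemma le_of_star_le_star (S : PocSet P) {a b : P} (h : S.star a ≤ S.star b) : b ≤ a := by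
  have := S.star_anti _ _ h
  rwa [S.star_star, S.star_star] at this

lemma le_star_swap (S : PocSet P) {a b : P} (h : a ≤ S.star b) : b ≤ S.star a := by
  have := S.star_anti _ _ h
  rwa [S.star_star] at this

lemma star_eq_zero_of_star_le (S : PocSet P) {a : P} (h : S.star a ≤ a) : S.star a = S.zero := by
  apply S.eq_zero_of_le_star
  rwa [S.star_star]

lemma IsVertex.not_star_mem {S : PocSet P} {α : Set P} (h : S.IsVertex α) {b : P}
    (hb : b ∈ α) : S.star b ∉ α := (h.2 b).mp hb

lemma IsVertex.mem_of_star_not_mem {S : PocSet P} {α : Set P} (h : S.IsVertex α) {b : P}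
    (hb : S.star b ∉ α) : b ∈ α := (h.2 b).mpr hb

lemma IsVertex.upward {S : PocSet P} {α : Set P} (h : S.IsVertex α) {b c : P}
    (hb : b ∈ α) (hbc : b ≤ c) : c ∈ α := by
  by_contra hc
  have hcs : S.star c ∈ α := by
    by_contra h'
    exact hc ((h.2 c).mpr h')
  have := h.1 b hb (S.star c) hcs
  rw [S.star_star] at this
  exact this hbc

lemma IsVertex.zero_not_mem {S : PocSet P} {α : Set P} (h : S.IsVertex α) : S.zero ∉ α := by
  intro h0
  exact h.1 _ h0 _ h0 (S.zero_le _)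

lemma IsVertex.one_mem {S : PocSet P} {α : Set P} (h : S.IsVertex α) : S.one ∈ α := by
  apply h.mem_of_star_not_mem
  have : S.star S.one = S.zero := by
    show S.star (S.star S.zero) = S.zero
    rw [S.star_star]
  rw [this]
  exact h.zero_not_mem

/-- The canonical vertex associated to a proper element nested with everything. -/
lemma nested_vertex (S : PocSet P) (a : P) (ha : S.Proper a)
    (hnest : ∀ b : P, S.Proper b → b ≠ a → b ≠ S.star a →
      a ≤ b ∨ a ≤ S.star b ∨ S.star a ≤ b ∨ S.star a ≤ S.star b) :
    S.IsVertex {b | a ≤ b ∨ (S.star a ≤ b ∧ b ≠ S.star a)} := by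
  have haz : a ≠ S.zero := ha.1
  have hsaz : S.star a ≠ S.zero := fun h => ha.2 (S.eq_one_of_star_eq_zero h)
  constructor
  · rintro b hb c hc hbc
    simp only [Set.mem_setOf_eq] at hb hc
    rcases hb with hb | ⟨hb, hb'⟩ <;> rcases hc with hc | ⟨hc, hc'⟩
    · have h2 : c ≤ S.star a := S.le_star_swap (hb.trans hbc)
      exact haz (S.eq_zero_of_le_star a (hc.trans h2))
    · have h2 : c ≤ S.star a := S.le_star_swap (hb.trans hbc)
      exact hc' (le_antisymm h2 hc)
    · have h2 : c ≤ a := S.le_of_star_le_star (hb.trans hbc)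
      have hac : a = c := le_antisymm hc h2
      refine hb' (le_antisymm (hbc.trans ?_) hb)
      rw [hac]
    · have h2 : c ≤ a := S.le_of_star_le_star (hb.trans hbc)
      exact hsaz (S.star_eq_zero_of_star_le (hc.trans h2))
  · intro b
    simp only [Set.mem_setOf_eq]
    constructor
    · rintro (hb | ⟨hb, hb'⟩) (h | ⟨h, h'⟩)
      · exact haz (S.eq_zero_of_le_star a (hb.trans (S.le_star_swap h)))
      · exact h' (congrArg S.star (le_antisymm hb (S.le_of_star_le_star h)).symm)
      · exact hb' (le_antisymm (S.le_star_swap h) hb)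
      · exact hsaz (S.star_eq_zero_of_star_le (hb.trans (S.le_of_star_le_star h)))
    · intro hns
      by_contra hbm
      apply hns
      by_cases hb2 : b = S.star a
      · subst hb2
        left
        rw [S.star_star]
      by_cases hb1 : b = a
      · exact absurd (Or.inl (le_of_eq hb1.symm)) hbm
      by_cases hb3 : b = S.zero
      · subst hb3
        left
        exact S.le_one a
      by_cases hb4 : b = S.one
      · refine absurd (Or.inr ⟨?_, hb2⟩) hbm
        rw [hb4]; exact S.le_one _
      rcases hnest b ⟨hb3, hb4⟩ hb1 hb2 with h | h | h | h
      · exact absurd (Or.inl h) hbm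
      · exact Or.inl h
      · exact absurd (Or.inr ⟨h, hb2⟩) hbm
      · exact Or.inr ⟨h, fun he => hb1 (S.star_inj he)⟩

end PocSet

theorem stmt13 {P : Type*} [PartialOrder P] [Finite P] (S : PocSet P) (a : P)
    (ha : S.Proper a)
    (hnest : ∀ b : P, S.Proper b → b ≠ a → b ≠ S.star a →
      a ≤ b ∨ a ≤ S.star b ∨ S.star a ≤ b ∨ S.star a ≤ S.star b) :
    ∃! p : Set P × Set P, S.IsVertex p.1 ∧ S.IsVertex p.2 ∧ a ∈ p.1 ∧
      symmDiff p.1 p.2 = {a, S.star a} := by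
  classical
  have haz : a ≠ S.zero := ha.1
  have hao : a ≠ S.one := ha.2
  have hsaz : S.star a ≠ S.zero := fun h => hao (S.eq_one_of_star_eq_zero h)
  have hsao : S.star a ≠ S.one := by
    intro h
    exact haz (S.star_inj (h.trans rfl) )
  have ha' : S.Proper (S.star a) := ⟨hsaz, hsao⟩
  have hnest' : ∀ b : P, S.Proper b → b ≠ S.star a → b ≠ S.star (S.star a) →
      S.star a ≤ b ∨ S.star a ≤ S.star b ∨ S.star (S.star a) ≤ b ∨
        S.star (S.star a) ≤ S.star b := by
    intro b hb hb1 hb2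
    rw [S.star_star] at hb2 ⊢
    rcases hnest b hb hb2 hb1 with h | h | h | h <;> tauto
  set u : Set P := {b | a ≤ b ∨ (S.star a ≤ b ∧ b ≠ S.star a)} with hu_def
  set v : Set P := {b | S.star a ≤ b ∨ (a ≤ b ∧ b ≠ a)} with hv_def
  have hu : S.IsVertex u := S.nested_vertex a ha hnest
  have hv : S.IsVertex v := by
    have := S.nested_vertex (S.star a) ha' hnest'
    have he : {b | S.star a ≤ b ∨ (S.star (S.star a) ≤ b ∧ b ≠ S.star (S.star a))} = v := by
      ext b
      rw [S.star_star]
    rwa [he] at this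
  have hau : a ∈ u := Or.inl le_rfl
  have hanv : a ∉ v := by
    rintro (h | ⟨_, h⟩)
    · exact hsaz (S.star_eq_zero_of_star_le h)
    · exact h rfl
  have hsanu : S.star a ∉ u := by
    rintro (h | ⟨_, h⟩)
    · exact haz (S.eq_zero_of_le_star a h)
    · exact h rfl
  have hsav : S.star a ∈ v := Or.inl le_rfl
  have hsymm : symmDiff u v = {a, S.star a} := by
    ext b
    rw [Set.mem_symmDiff]
    simp only [Set.mem_insert_iff, Set.mem_singleton_iff]
    by_cases hb1 : b = a
    · subst hb1; tauto
    by_cases hb2 : b = S.star a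
    · subst hb2; tauto
    have : b ∈ u ↔ b ∈ v := by
      simp only [hu_def, hv_def, Set.mem_setOf_eq, hb1, hb2]
      tauto
    tauto
  refine ⟨(u, v), ⟨hu, hv, hau, hsymm⟩, ?_⟩
  rintro ⟨u', v'⟩ ⟨hu', hv', hau', hsymm'⟩
  simp only at hu' hv' hau' hsymm'
  have hsanu' : S.star a ∉ u' := hu'.not_star_mem hau'
  have hsav' : S.star a ∈ v' := by
    have : S.star a ∈ symmDiff u' v' := by
      rw [hsymm']; right; rfl
    rw [Set.mem_symmDiff] at this
    tauto
  have huu : u' = u := by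
    ext b
    by_cases hb1 : b = a
    · subst hb1; simp only [hau, hau']
    by_cases hb2 : b = S.star a
    · subst hb2; simp [hsanu', hsanu]
    have hbmem : b ∈ u' ↔ b ∈ v' := by
      have : b ∉ symmDiff u' v' := by
        rw [hsymm']
        simp [hb1, hb2]
      rw [Set.mem_symmDiff] at this
      tauto
    by_cases hb3 : b = S.zero
    · subst hb3
      simp only [hu'.zero_not_mem, false_iff]
      rintro (h | ⟨h, _⟩)
      · exact haz (le_antisymm h (S.zero_le a))
      · exact hsaz (le_antisymm h (S.zero_le _))
    by_cases hb4 : b = S.one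
    · subst hb4
      simp only [hu'.one_mem, true_iff]
      exact Or.inl (S.le_one a)
    rcases hnest b ⟨hb3, hb4⟩ hb1 hb2 with h | h | h | h
    · constructor
      · intro; exact Or.inl h
      · intro; exact hu'.upward hau' h
    · have hbsu' : S.star b ∈ u' := hu'.upward hau' h
      have hbnu' : b ∉ u' := fun hb => hu'.not_star_mem hb hbsu'
      simp only [hbnu', false_iff]
      rintro (h' | ⟨h', _⟩)
      · exact haz (S.eq_zero_of_le_star a (h'.trans (S.le_star_swap h)))
      · exact hb2 (le_antisymm (S.le_star_swap h) h')
    · constructor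
      · intro; exact Or.inr ⟨h, hb2⟩
      · intro
        exact hbmem.mpr (hv'.upward hsav' h)
    · have hba : b ≤ a := S.le_of_star_le_star h
      have hbsv' : S.star b ∈ v' := hv'.upward hsav' h
      have hbnv' : b ∉ v' := fun hb => hv'.not_star_mem hb hbsv'
      have hbnu' : b ∉ u' := fun hb => hbnv' (hbmem.mp hb)
      simp only [hbnu', false_iff]
      rintro (h' | ⟨h', _⟩)
      · exact hb1 (le_antisymm hba h')
      · exact hsaz (S.star_eq_zero_of_star_le (h'.trans hba))
  have hvv : v' = v := by
    have h1 : v' = symmDiff u' {a, S.star a} := by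
      rw [← hsymm', symmDiff_symmDiff_cancel_left]
    have h2 : v = symmDiff u {a, S.star a} := by
      rw [← hsymm, symmDiff_symmDiff_cancel_left]
    rw [h1, h2, huu]
  rw [Prod.mk.injEq]
  exact ⟨huu, hvv⟩
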